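/- Let F be a field, let n = ν·n_ℓ with ν ≥ 1 and n_ℓ ≥ 2, let γ ∈ F be a primitive n-th root of unity, let 1 ≤ r ≤ n_ℓ − 1 and δ = n_ℓ − r + 1, and let k be an integer with 1 ≤ k ≤ rν. Write k = a·r + b with 0 ≤ a ≤ ν−1 and 1 ≤ b ≤ r, and let T_k = { z·n_ℓ + y : 0 ≤ z ≤ a−1, 0 ≤ y ≤ r−1 } ∪ { a·n_ℓ + y : 0 ≤ y ≤ b−1 }. Then for every nonzero polynomial M in the F-span of the monomials { X^t : t ∈ T_k }, the number of indices u ∈ {0, 1, …, n−1} with M(γ^u) ≠ 0 is at least n − k + 1 − a·(δ − 1), which equals n − (a·n_ℓ + b) + 1. -/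

import Mathlib

open Polynomial

/-- Minimum-distance optimality of the Tamo-Barg code: every nonzero
polynomial in the span of the monomials `{X^t : t ∈ T_k}` is nonzero at at
least `n − k + 1 − a·(δ − 1) = n − (a·n_ℓ + b) + 1` of the `n` evaluation
points `1, γ, …, γ^{n−1}`. -/
theorem tamo_barg_min_distance
    (F : Type*) [Field F] (ν nℓ r δ k a b : ℕ)
    (hν : 1 ≤ ν) (hnℓ : 2 ≤ nℓ) (hr : 1 ≤ r) (hrn : r ≤ nℓ - 1)
    (hδ : δ = nℓ - r + 1)
    (γ : F) (hγ : IsPrimitiveRoot γ (ν * nℓ))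
    (hk1 : 1 ≤ k) (hkr : k ≤ r * ν)
    (hk : k = a * r + b) (ha : a ≤ ν - 1) (hb1 : 1 ≤ b) (hbr : b ≤ r) :
    (ν * nℓ - k + 1 - a * (δ - 1) = ν * nℓ - (a * nℓ + b) + 1) ∧
    ∀ M : F[X],
      M ∈ Submodule.span F
        ((fun t : ℕ => (X : F[X]) ^ t) ''
          ({t | ∃ z < a, ∃ y < r, t = z * nℓ + y} ∪
           {t | ∃ y < b, t = a * nℓ + y})) →
      M ≠ 0 →
      ν * nℓ - k + 1 - a * (δ - 1)
        ≤ {u : ℕ | u < ν * nℓ ∧ M.eval (γ ^ u) ≠ 0}.ncard := by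
  have hrnℓ : r ≤ nℓ := by omega
  have h1 : a * r + a * (nℓ - r) = a * nℓ := by
    rw [← Nat.mul_add, Nat.add_sub_cancel' hrnℓ]
  have h2 : (a + 1) * nℓ ≤ ν * nℓ := Nat.mul_le_mul_right _ (by omega)
  have h3 : (a + 1) * nℓ = a * nℓ + nℓ := by ring
  have hident : ν * nℓ - k + 1 - a * (δ - 1) = ν * nℓ - (a * nℓ + b) + 1 := by
    have hδ1 : δ - 1 = nℓ - r := by omega
    rw [hδ1]; omega
  refine ⟨hident, ?_⟩
  classical
  intro M hM hM0
  -- degree bound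
  have hspan : M ∈ Polynomial.degreeLT F (a * nℓ + b) := by
    refine Submodule.span_le.mpr ?_ hM
    rintro p ⟨t, ht, rfl⟩
    rw [SetLike.mem_coe, Polynomial.mem_degreeLT]
    have htlt : t < a * nℓ + b := by
      rcases ht with ⟨z, hz, y, hy, rfl⟩ | ⟨y, hy, rfl⟩
      · have hz1 : (z + 1) * nℓ ≤ a * nℓ := Nat.mul_le_mul_right _ hz
        have hz2 : (z + 1) * nℓ = z * nℓ + nℓ := by ring
        omega
      · omega
    simp only [Polynomial.degree_X_pow]
    exact_mod_cast htlt
  have hdeg : M.natDegree < a * nℓ + b :=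
    (Polynomial.natDegree_lt_iff_degree_lt hM0).mpr (Polynomial.mem_degreeLT.mp hspan)
  set n := ν * nℓ with hn
  set Z := (Finset.range n).filter (fun u => M.eval (γ ^ u) = 0) with hZ
  have hZcard : Z.card ≤ M.natDegree := by
    have hsub : Z.card ≤ M.roots.toFinset.card := by
      apply Finset.card_le_card_of_injOn (fun u => γ ^ u)
      · intro u hu
        simp only [hZ, Finset.mem_coe, Finset.mem_filter, Finset.mem_range] at hu
        rw [Finset.mem_coe, Multiset.mem_toFinset, Polynomial.mem_roots hM0]
        exact hu.2
      · intro u hu v hv huv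
        simp only [hZ, Finset.mem_coe, Finset.mem_filter, Finset.mem_range] at hu hv
        exact hγ.pow_inj hu.1 hv.1 huv
    calc Z.card ≤ M.roots.toFinset.card := hsub
      _ ≤ Multiset.card M.roots := M.roots.toFinset_card_le
      _ ≤ M.natDegree := Polynomial.card_roots' M
  have hset : {u : ℕ | u < n ∧ M.eval (γ ^ u) ≠ 0} =
      ↑((Finset.range n).filter (fun u => M.eval (γ ^ u) ≠ 0)) := by
    ext u; simp [Finset.mem_filter]
  have hab : a * nℓ + b ≤ n := by omega
  rw [hset, Set.ncard_coe_finset, hident]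
  have hsum := Finset.card_filter_add_card_filter_not
    (s := Finset.range n) (p := fun u => M.eval (γ ^ u) = 0)
  simp only [Finset.card_range, ne_eq] at hsum ⊢
  have hZc : Z.card = ((Finset.range n).filter (fun u => M.eval (γ ^ u) = 0)).card := rfl
  omega
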